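/- (Closed double-sum formula for Bell numbers, equation (Bell_closed)) For every natural number m, B_m = ∑_{j=0}^{m} ( j^m / j! ) · ∑_{k=0}^{m−j} (−1)^k / k!, an identity of rational numbers (with the convention 0^0 = 1). -/

import Mathlib

/-- The Bell number `B_m`: the number of partitions of an `m`-element set. -/
def bellNumber (m : ℕ) : ℕ :=
  Fintype.card (Finpartition (Finset.univ : Finset (Fin m)))

open Finset

lemma A_step (n : ℕ) (f : ℕ → ℚ) :
    ∑ j ∈ range (n+2), (-1:ℚ)^j * (n+1).choose j * f j
      = ∑ j ∈ range (n+1), (-1:ℚ)^j * n.choose j * (f j - f (j+1)) := by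
  rw [Finset.sum_range_succ']
  have h1 : ∀ j ∈ range (n+1), (-1:ℚ)^(j+1) * ((n+1).choose (j+1)) * f (j+1)
      = -((-1:ℚ)^j * n.choose j * f (j+1)) + (-1:ℚ)^(j+1) * (n.choose (j+1)) * f (j+1) := by
    intro j _
    rw [Nat.choose_succ_succ]
    push_cast
    ring
  rw [Finset.sum_congr rfl h1, Finset.sum_add_distrib]
  have h2 : ∑ j ∈ range (n+1), (-1:ℚ)^(j+1) * (n.choose (j+1)) * f (j+1)
      = ∑ j ∈ range (n+1), (-1:ℚ)^j * n.choose j * f j - (-1:ℚ)^0 * (n.choose 0) * f 0 := by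
    have := Finset.sum_range_succ' (fun j => (-1:ℚ)^j * n.choose j * f j) (n+1)
    rw [Finset.sum_range_succ (fun j => (-1:ℚ)^j * n.choose j * f j) (n+1)] at this
    simp only [Nat.choose_succ_self, Nat.cast_zero, mul_zero, zero_mul, add_zero] at this
    linarith [this]
  rw [h2, Finset.sum_neg_distrib]
  simp only [mul_sub, Finset.sum_sub_distrib, Nat.choose_zero_right, Nat.cast_one]
  ring

lemma alt_vanish : ∀ n : ℕ, ∀ i : ℕ, i < n →
    ∑ j ∈ range (n+1), (-1:ℚ)^j * n.choose j * (j:ℚ)^i = 0 := by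
  intro n
  induction n with
  | zero => omega
  | succ n ih =>
    intro i hi
    rw [show n+1+1 = n+2 from rfl, A_step]
    have key : ∀ j : ℕ, ((j:ℚ)^i - ((j+1:ℕ):ℚ)^i) = -∑ l ∈ range i, (i.choose l : ℚ) * (j:ℚ)^l := by
      intro j
      have h := add_pow (j:ℚ) 1 i
      rw [Finset.sum_range_succ] at h
      simp only [one_pow, mul_one, Nat.choose_self, Nat.cast_one] at h
      push_cast
      rw [h]
      rw [Finset.sum_congr rfl (fun l _ => by ring : ∀ l ∈ range i, (j:ℚ)^l * ↑(i.choose l) = ↑(i.choose l) * (j:ℚ)^l)]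
      ring
    calc ∑ j ∈ range (n+1), (-1:ℚ)^j * n.choose j * ((j:ℚ)^i - ((j+1:ℕ):ℚ)^i)
        = ∑ j ∈ range (n+1), (-1:ℚ)^j * n.choose j * (-∑ l ∈ range i, (i.choose l : ℚ) * (j:ℚ)^l) := by
          exact Finset.sum_congr rfl fun j _ => by rw [key j]
      _ = -∑ l ∈ range i, (i.choose l : ℚ) * ∑ j ∈ range (n+1), (-1:ℚ)^j * n.choose j * (j:ℚ)^l := by
          simp only [mul_neg, Finset.mul_sum, Finset.sum_neg_distrib, neg_inj]
          rw [Finset.sum_comm]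
          exact Finset.sum_congr rfl fun l _ => Finset.sum_congr rfl fun j _ => by ring
      _ = 0 := by
          rw [Finset.sum_eq_zero, neg_zero]
          intro l hl
          rw [ih l (by simp at hl; omega), mul_zero]

/-- truncated exponential at -1 -/
def Texp (r : ℕ) : ℚ := ∑ k ∈ range (r+1), (-1:ℚ)^k / k.factorial

/-- truncated Dobinski sum -/
def Sdob (m N : ℕ) : ℚ := ∑ j ∈ range (N+1), (j:ℚ)^m / j.factorial * Texp (N - j)

lemma Sdob_succ (m N : ℕ) :
    Sdob m (N+1) = Sdob m N
      + ∑ j ∈ range (N+2), (-1:ℚ)^(N+1-j) * (j:ℚ)^m / (j.factorial * (N+1-j).factorial) := by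
  unfold Sdob
  rw [Finset.sum_range_succ, Finset.sum_range_succ (fun j => (-1:ℚ)^(N+1-j) * (j:ℚ)^m / (j.factorial * (N+1-j).factorial))]
  have h1 : ∀ j ∈ range (N+1), (j:ℚ)^m / j.factorial * Texp (N+1-j)
      = (j:ℚ)^m / j.factorial * Texp (N-j)
        + (-1:ℚ)^(N+1-j) * (j:ℚ)^m / (j.factorial * (N+1-j).factorial) := by
    intro j hj
    rw [Finset.mem_range] at hj
    have hj' : j ≤ N := by omega
    have hsub : N + 1 - j = (N - j) + 1 := by omega
    rw [hsub]
    unfold Texp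
    rw [Finset.sum_range_succ]
    have : (j.factorial : ℚ) ≠ 0 := Nat.cast_ne_zero.2 (Nat.factorial_ne_zero j)
    have : ((N-j+1).factorial : ℚ) ≠ 0 := Nat.cast_ne_zero.2 (Nat.factorial_ne_zero _)
    field_simp
  rw [Finset.sum_congr rfl h1, Finset.sum_add_distrib]
  simp only [Nat.sub_self, Texp, Nat.factorial_zero]
  norm_num
  ring

lemma Dterm_vanish (m N : ℕ) (h : m < N + 1) :
    ∑ j ∈ range (N+2), (-1:ℚ)^(N+1-j) * (j:ℚ)^m / (j.factorial * (N+1-j).factorial) = 0 := by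
  have key : ∀ j ∈ range (N+2),
      (-1:ℚ)^(N+1-j) * (j:ℚ)^m / (j.factorial * (N+1-j).factorial)
        = (-1:ℚ)^(N+1) / ((N+1).factorial) * ((-1:ℚ)^j * ((N+1).choose j) * (j:ℚ)^m) := by
    intro j hj
    rw [Finset.mem_range] at hj
    have hj' : j ≤ N + 1 := by omega
    have hfac : ((N+1).choose j) * j.factorial * (N+1-j).factorial = (N+1).factorial :=
      Nat.choose_mul_factorial_mul_factorial hj'
    have hsign : (-1:ℚ)^(N+1-j) * (-1:ℚ)^j = (-1:ℚ)^(N+1) := by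
      rw [← pow_add, Nat.sub_add_cancel hj']
    have h1 : (j.factorial : ℚ) ≠ 0 := Nat.cast_ne_zero.2 (Nat.factorial_ne_zero j)
    have h2 : (((N+1-j).factorial : ℕ) : ℚ) ≠ 0 := Nat.cast_ne_zero.2 (Nat.factorial_ne_zero _)
    have h3 : (((N+1).factorial : ℕ) : ℚ) ≠ 0 := Nat.cast_ne_zero.2 (Nat.factorial_ne_zero _)
    have hfacQ : (((N+1).choose j : ℕ) : ℚ) * j.factorial * (N+1-j).factorial = (N+1).factorial := by
      exact_mod_cast congrArg (Nat.cast : ℕ → ℚ) hfac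
    have hb : (-1:ℚ)^j * (-1:ℚ)^j = 1 := by rw [← pow_add, ← two_mul, pow_mul]; norm_num
    field_simp
    rw [← hsign]
    linear_combination (-((-1:ℚ)^(N+1-j)) * (j:ℚ)^m) * hfacQ
      + (-((-1:ℚ)^(N+1-j)) * (((N+1).choose j : ℕ) : ℚ) * (j:ℚ)^m
          * ((j.factorial : ℚ) * ((N+1-j).factorial : ℚ))) * hb
  rw [Finset.sum_congr rfl key, ← Finset.mul_sum, alt_vanish (N+1) m h, mul_zero]

lemma Sdob_stable (m N : ℕ) (h : m ≤ N) : Sdob m N = Sdob m m := by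
  induction N with
  | zero => rw [Nat.le_zero.1 h]
  | succ N ih =>
    rcases Nat.lt_or_ge m (N+1) with h' | h'
    · rw [Sdob_succ, Dterm_vanish m N h', add_zero, ih (by omega)]
    · have : m = N + 1 := by omega
      rw [this]

lemma Sdob_zero : Sdob 0 0 = 1 := by
  unfold Sdob Texp
  simp

lemma Sdob_rec (m : ℕ) :
    Sdob (m+1) (m+1) = ∑ i ∈ range (m+1), (m.choose i : ℚ) * Sdob i i := by
  unfold Sdob
  rw [Finset.sum_range_succ']
  simp only [Nat.cast_zero, zero_pow (Nat.succ_ne_zero m), Nat.factorial_zero, Nat.cast_one,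
    zero_div, zero_mul, add_zero]
  have h1 : ∀ j ∈ range (m+1), ((j+1:ℕ):ℚ)^(m+1) / (j+1).factorial * Texp (m+1-(j+1))
      = ∑ i ∈ range (m+1), (m.choose i : ℚ) * ((j:ℚ)^i / j.factorial * Texp (m - j)) := by
    intro j hj
    have hsub : m + 1 - (j+1) = m - j := by omega
    rw [hsub]
    have hfac : ((j+1).factorial : ℚ) = ((j:ℚ)+1) * j.factorial := by
      rw [Nat.factorial_succ]; push_cast; ring
    have hpow : ((j+1:ℕ):ℚ)^(m+1) = ((j:ℚ)+1)^m * ((j:ℚ)+1) := by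
      push_cast; ring
    have hbin : ((j:ℚ)+1)^m = ∑ i ∈ range (m+1), (m.choose i : ℚ) * (j:ℚ)^i := by
      have h := add_pow (j:ℚ) 1 m
      simp only [one_pow, mul_one] at h
      rw [h]
      exact Finset.sum_congr rfl fun i _ => by ring
    have hj1 : ((j:ℚ)+1) ≠ 0 := by positivity
    have hjf : (j.factorial : ℚ) ≠ 0 := Nat.cast_ne_zero.2 (Nat.factorial_ne_zero j)
    rw [hpow, hfac, hbin, Finset.sum_mul, Finset.sum_div, Finset.sum_mul]
    apply Finset.sum_congr rfl
    intro i _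
    field_simp
  rw [Finset.sum_congr rfl h1, Finset.sum_comm]
  apply Finset.sum_congr rfl
  intro i hi
  rw [Finset.mem_range] at hi
  rw [← Finset.mul_sum]
  congr 1
  have hst := Sdob_stable i m (by omega)
  unfold Sdob at hst
  exact hst

section MapPart

variable {α β : Type*} [DecidableEq α] [DecidableEq β]

lemma sup_map_finset (f : α ↪ β) (u : Finset (Finset α)) :
    u.sup (fun t => t.map f) = (u.sup id).map f := by
  induction u using Finset.induction_on with
  | empty => simp
  | insert _ _ h ih =>
    rw [Finset.sup_insert, Finset.sup_insert, ih, id_eq, Finset.sup_eq_union,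
      Finset.sup_eq_union, Finset.map_union]

/-- Map a finpartition along an embedding of the ambient type. -/
def Finpartition.mapEmb (f : α ↪ β) {s : Finset α} (P : Finpartition s) :
    Finpartition (s.map f) where
  parts := P.parts.map (Finset.mapEmbedding f).toEmbedding
  supIndep := by
    rw [Finset.supIndep_iff_pairwiseDisjoint]
    rintro t ht u hu htu
    simp only [Finset.mem_coe, Finset.mem_map, RelEmbedding.coe_toEmbedding,
      Finset.mapEmbedding_apply] at ht hu
    obtain ⟨t0, ht0, rfl⟩ := ht
    obtain ⟨u0, hu0, rfl⟩ := hu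
    have hne : t0 ≠ u0 := by rintro rfl; exact htu rfl
    exact (Finset.disjoint_map f).2 (P.disjoint ht0 hu0 hne)
  sup_parts := by
    rw [Finset.sup_map]
    rw [show (id ∘ ⇑(Finset.mapEmbedding f).toEmbedding : Finset α → Finset β)
        = fun t => t.map f from funext fun t => Finset.mapEmbedding_apply]
    rw [sup_map_finset, P.sup_parts]
  bot_notMem := by
    simp only [Finset.bot_eq_empty, Finset.mem_map, RelEmbedding.coe_toEmbedding,
      Finset.mapEmbedding_apply]
    rintro ⟨t, ht, hmap⟩
    rw [Finset.map_eq_empty] at hmap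
    exact P.bot_notMem (by rw [Finset.bot_eq_empty, ← hmap]; exact ht)

lemma Finpartition.mapEmb_parts (f : α ↪ β) {s : Finset α} (P : Finpartition s) :
    (P.mapEmb f).parts = P.parts.map (Finset.mapEmbedding f).toEmbedding := rfl

lemma card_finpartition_mapEmb (f : α ↪ β) (s : Finset α) :
    Fintype.card (Finpartition s) = Fintype.card (Finpartition (s.map f)) := by
  apply Fintype.card_of_bijective (f := Finpartition.mapEmb f)
  constructor
  · intro P Q h
    apply Finpartition.ext
    have := congrArg Finpartition.parts h
    rw [Finpartition.mapEmb_parts, Finpartition.mapEmb_parts] at this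
    exact Finset.map_injective _ this
  · intro Q
    -- recover each part as image of preimage
    have hrec : ∀ t ∈ Q.parts, (t.preimage f f.injective.injOn).map f = t := by
      intro t ht
      ext b
      simp only [Finset.mem_map, Finset.mem_preimage]
      constructor
      · rintro ⟨a, ha, rfl⟩; exact ha
      · intro hb
        have hb' : b ∈ s.map f := Q.le ht hb
        rw [Finset.mem_map] at hb'
        obtain ⟨a, _, rfl⟩ := hb'
        exact ⟨a, hb, rfl⟩
    refine ⟨⟨Q.parts.image (fun t => t.preimage f f.injective.injOn), ?_, ?_, ?_⟩, ?_⟩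
    · rw [Finset.supIndep_iff_pairwiseDisjoint]
      rintro t ht u hu htu
      simp only [Finset.mem_coe, Finset.mem_image] at ht hu
      obtain ⟨t0, ht0, rfl⟩ := ht
      obtain ⟨u0, hu0, rfl⟩ := hu
      have hne : t0 ≠ u0 := by rintro rfl; exact htu rfl
      have hdisj := Q.disjoint ht0 hu0 hne
      simp only [id_eq, Finset.disjoint_left, Finset.mem_preimage] at hdisj ⊢
      exact fun a hat hau => hdisj hat hau
    · ext a
      rw [Finset.mem_sup]
      constructor
      · rintro ⟨t', ht', hat'⟩
        rw [Finset.mem_image] at ht'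
        obtain ⟨t, ht, rfl⟩ := ht'
        rw [id_eq, Finset.mem_preimage] at hat'
        have : f a ∈ s.map f := Q.le ht hat'
        exact (Finset.mem_map' f).1 this
      · intro ha
        have : f a ∈ s.map f := (Finset.mem_map' f).2 ha
        rw [← Q.sup_parts, Finset.mem_sup] at this
        obtain ⟨t, ht, hat⟩ := this
        refine ⟨t.preimage f f.injective.injOn, Finset.mem_image_of_mem _ ht, ?_⟩
        rw [id_eq, Finset.mem_preimage]
        exact hat
    · simp only [Finset.bot_eq_empty, Finset.mem_image]
      rintro ⟨t, ht, hpre⟩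
      obtain ⟨b, hb⟩ := Q.nonempty_of_mem_parts ht
      have hb' : b ∈ s.map f := Q.le ht hb
      rw [Finset.mem_map] at hb'
      obtain ⟨a, _, rfl⟩ := hb'
      have : a ∈ t.preimage f f.injective.injOn := by rw [Finset.mem_preimage]; exact hb
      rw [hpre] at this
      exact absurd this (Finset.notMem_empty a)
    · apply Finpartition.ext
      rw [Finpartition.mapEmb_parts]
      ext t
      simp only [Finset.mem_map, Finset.mem_image, RelEmbedding.coe_toEmbedding,
        Finset.mapEmbedding_apply]
      constructor
      · rintro ⟨t', ⟨u, hu, rfl⟩, rfl⟩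
        rw [hrec u hu]; exact hu
      · intro ht
        exact ⟨t.preimage f f.injective.injOn, ⟨t, ht, rfl⟩, hrec t ht⟩

end MapPart

noncomputable section

lemma card_finpartition_eq_bell {α : Type*} [DecidableEq α] (s : Finset α) :
    Fintype.card (Finpartition s) = bellNumber s.card := by
  obtain ⟨n, hn⟩ : ∃ n, s.card = n := ⟨_, rfl⟩
  rw [hn]
  set g : Fin n ↪ α :=
    ((s.equivFinOfCardEq hn).symm.toEmbedding.trans (Function.Embedding.subtype _)) with hg
  have hmap : (Finset.univ : Finset (Fin n)).map g = s := by
    rw [hg, ← Finset.map_map, Finset.map_univ_equiv, Finset.univ_eq_attach,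
      Finset.attach_map_val]
  rw [← hmap, bellNumber, ← card_finpartition_mapEmb]

lemma bellNumber_zero : bellNumber 0 = 1 := by
  rw [bellNumber]
  have : (Finset.univ : Finset (Fin 0)) = (⊥ : Finset (Fin 0)) := rfl
  rw [this]
  exact Fintype.card_unique

lemma avoid_parts_of_mem {α : Type*} [DecidableEq α] {s : Finset α} (P : Finpartition s)
    {t : Finset α} (ht : t ∈ P.parts) : (P.avoid t).parts = P.parts.erase t := by
  ext c
  rw [Finpartition.mem_avoid, Finset.mem_erase]
  constructor
  · rintro ⟨d, hd, hdt, rfl⟩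
    have hne : d ≠ t := fun h => hdt (le_of_eq h)
    have hdisj : Disjoint d t := P.disjoint hd ht hne
    rw [Finset.sdiff_eq_self_of_disjoint hdisj]
    exact ⟨hne, hd⟩
  · rintro ⟨hne, hc⟩
    refine ⟨c, hc, ?_, ?_⟩
    · intro hle
      have hdisj : Disjoint c t := P.disjoint hc ht hne
      exact P.ne_bot hc (Finset.bot_eq_empty ▸ Finset.subset_empty.1
        (by simpa using hdisj.mono_right hle le_rfl))
    · exact Finset.sdiff_eq_self_of_disjoint (P.disjoint hc ht hne)

lemma bellNumber_rec (m : ℕ) :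
    bellNumber (m + 1) = ∑ k ∈ range (m + 1), (m.choose k) * bellNumber k := by
  classical
  set a : Fin (m + 1) := 0 with ha
  set A : Finset (Finset (Fin (m+1))) := Finset.univ.powerset.filter (fun t => a ∈ t) with hA
  have step1 : bellNumber (m + 1)
      = ∑ t ∈ A, ((Finset.univ : Finset (Finpartition (Finset.univ : Finset (Fin (m+1))))).filter
          (fun P => P.part a = t)).card := by
    rw [bellNumber, ← Finset.card_univ]
    apply Finset.card_eq_sum_card_fiberwise
    intro P _
    rw [Finset.mem_coe, hA, Finset.mem_filter, Finset.mem_powerset]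
    exact ⟨Finset.subset_univ _, P.mem_part (Finset.mem_univ a)⟩
  have step2 : ∀ t ∈ A,
      ((Finset.univ : Finset (Finpartition (Finset.univ : Finset (Fin (m+1))))).filter
        (fun P => P.part a = t)).card = bellNumber (m + 1 - t.card) := by
    intro t ht
    rw [hA, Finset.mem_filter, Finset.mem_powerset] at ht
    obtain ⟨htu, hat⟩ := ht
    have htne : t ≠ ⊥ := by
      rw [Finset.bot_eq_empty]
      exact Finset.ne_empty_of_mem hat
    have hdisj : Disjoint ((Finset.univ : Finset (Fin (m+1))) \ t) t := Finset.sdiff_disjoint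
    have hsup : ((Finset.univ : Finset (Fin (m+1))) \ t) ⊔ t = Finset.univ := by
      rw [Finset.sup_eq_union, Finset.sdiff_union_of_subset htu]
    have htcard : t.card ≤ m + 1 := by
      have := Finset.card_le_card htu
      rwa [Finset.card_univ, Fintype.card_fin] at this
    have htpos : 0 < t.card := Finset.card_pos.2 ⟨a, hat⟩
    have hcard : Fintype.card (Finpartition ((Finset.univ : Finset (Fin (m+1))) \ t))
        = bellNumber (m + 1 - t.card) := by
      rw [card_finpartition_eq_bell, Finset.card_sdiff_of_subset htu, Finset.card_univ, Fintype.card_fin]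
    rw [← hcard, ← Finset.card_univ]
    refine Finset.card_bij' (fun P _ => P.avoid t)
      (fun Q _ => Q.extend htne hdisj hsup) ?_ ?_ ?_ ?_
    · intro P _; exact Finset.mem_univ _
    · intro Q _
      rw [Finset.mem_filter]
      refine ⟨Finset.mem_univ _, ?_⟩
      apply Finpartition.part_eq_of_mem
      · exact Finset.mem_insert_self t _
      · exact hat
    · intro P hP
      rw [Finset.mem_filter] at hP
      obtain ⟨-, hpart⟩ := hP
      have htP : t ∈ P.parts := hpart ▸ P.part_mem.2 (Finset.mem_univ a)
      apply Finpartition.ext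
      rw [Finpartition.extend_parts, avoid_parts_of_mem P htP, Finset.insert_erase htP]
    · intro Q hQ
      have htQ : t ∉ Q.parts := by
        intro h
        have h2 : a ∈ (Finset.univ : Finset (Fin (m+1))) \ t := Q.le h hat
        rw [Finset.mem_sdiff] at h2
        exact h2.2 hat
      apply Finpartition.ext
      have hmem : t ∈ (Q.extend htne hdisj hsup).parts := Finset.mem_insert_self t _
      rw [avoid_parts_of_mem _ hmem, Finpartition.extend_parts, Finset.erase_insert htQ]
  rw [step1, Finset.sum_congr rfl step2]
  have step3 : ∑ t ∈ A, bellNumber (m + 1 - t.card)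
      = ∑ u ∈ (Finset.univ.erase a).powerset, bellNumber (m - u.card) := by
    refine Finset.sum_bij' (fun t _ => t.erase a) (fun u _ => insert a u) ?_ ?_ ?_ ?_ ?_
    · intro t ht
      rw [hA, Finset.mem_filter, Finset.mem_powerset] at ht
      rw [Finset.mem_powerset]
      exact Finset.erase_subset_erase a ht.1
    · intro u hu
      rw [Finset.mem_powerset] at hu
      rw [hA, Finset.mem_filter, Finset.mem_powerset]
      exact ⟨Finset.subset_univ _, Finset.mem_insert_self a u⟩
    · intro t ht
      rw [hA, Finset.mem_filter] at ht
      exact Finset.insert_erase ht.2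
    · intro u hu
      rw [Finset.mem_powerset] at hu
      apply Finset.erase_insert
      intro hau
      exact (Finset.notMem_erase a _) (hu hau)
    · intro t ht
      rw [hA, Finset.mem_filter] at ht
      congr 1
      rw [Finset.card_erase_of_mem ht.2]
      have : 0 < t.card := Finset.card_pos.2 ⟨a, ht.2⟩
      omega
  rw [step3]
  have hcard : (Finset.univ.erase a).card = m := by
    rw [Finset.card_erase_of_mem (Finset.mem_univ a), Finset.card_univ, Fintype.card_fin]
    omega
  rw [Finset.sum_powerset_apply_card (fun k => bellNumber (m - k)), hcard]
  rw [← Finset.sum_range_reflect]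
  simp only [smul_eq_mul]
  apply Finset.sum_congr rfl
  intro k hk
  rw [Finset.mem_range] at hk
  have hk' : k ≤ m := by omega
  rw [show m + 1 - 1 - k = m - k from by omega, Nat.choose_symm hk',
    show m - (m - k) = k from by omega]

end


/-- closed double-sum formula for Bell numbers, equation (Bell_closed):
`B_m = ∑_{j=0}^{m} (j^m / j!) · ∑_{k=0}^{m−j} (−1)^k / k!`, as rational numbers
(with the convention `0^0 = 1`). -/
theorem bell_closed_double_sum (m : ℕ) :
    (bellNumber m : ℚ)
      = ∑ j ∈ Finset.range (m + 1),
          ((j : ℚ) ^ m / j.factorial)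
            * ∑ k ∈ Finset.range (m - j + 1), (-1 : ℚ) ^ k / k.factorial := by
  have key : ∀ n : ℕ, (bellNumber n : ℚ) = Sdob n n := by
    intro n
    induction n using Nat.strong_induction_on with
    | _ n ih =>
      match n with
      | 0 => rw [bellNumber_zero, Sdob_zero]; norm_num
      | (n+1) =>
        rw [bellNumber_rec, Sdob_rec]
        push_cast
        apply Finset.sum_congr rfl
        intro k hk
        rw [Finset.mem_range] at hk
        rw [ih k (by omega)]
  rw [key m]
  unfold Sdob Texp
  rfl
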